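/- There is a constant c > 0 such that for every n > 0 there exists a finitary Büchi automaton A''_n over the alphabet Σ_I × Σ_O with Σ_I = {0,1} and Σ_O = {1,…,n} × {0,1} and with at most c·n² states such that for every j ∈ {0, 1, …, n}: Player O wins Γ_{f_j}(L(A''_n)), an optimal winning strategy for Player O in Γ_{f_j}(L(A''_n)) exists, and it has cost 2(n+1) − j. -/

import Mathlib

attribute [local instance] Classical.propDecidable

noncomputable section

/-- A parity automaton with costs `(Q, A, qI, δ, Ω, Cst)`.
`Cst q a = true` means that the transition `(q, a, δ q a)` is an increment-transition,
`Cst q a = false` means it is an `ε`-transition. -/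
structure PACost (Q : Type) (A : Type) where
  qI : Q
  δ : Q → A → Q
  Ω : Q → ℕ
  Cst : Q → A → Bool

namespace PACost

variable {Q A : Type}

/-- The state reached after processing the first `n` letters of `w` starting in `q0`. -/
def stateAt (M : PACost Q A) (q0 : Q) (w : ℕ → A) : ℕ → Q
  | 0 => q0
  | n + 1 => M.δ (stateAt M q0 w n) (w n)

/-- The cost (number of increment-transitions) of the run infix between positions `m` and `n`. -/
def segCost (M : PACost Q A) (q0 : Q) (w : ℕ → A) (m n : ℕ) : ℕ :=
  ((Finset.Ico m n).filter fun j => M.Cst (stateAt M q0 w j) (w j) = true).card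

/-- `Ans c`: the set of even colors of `M` that are larger than `c`. -/
def Ans (M : PACost Q A) (c : ℕ) : Set ℕ :=
  { c' | (∃ q, M.Ω q = c') ∧ c < c' ∧ Even c' }

/-- The cost-of-response at position `n` of the run of `M` on `w` starting in `q0`. -/
def Cor (M : PACost Q A) (q0 : Q) (w : ℕ → A) (n : ℕ) : ℕ∞ :=
  if Even (M.Ω (stateAt M q0 w n)) then 0
  else
    sInf { c : ℕ∞ | ∃ n', n < n' ∧
      M.Ω (stateAt M q0 w n') ∈ M.Ans (M.Ω (stateAt M q0 w n)) ∧
      c = (segCost M q0 w n n' : ℕ∞) }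

/-- The run of `M` on `w` starting in `q0` satisfies the parity condition with costs. -/
def Accepting (M : PACost Q A) (q0 : Q) (w : ℕ → A) : Prop :=
  Filter.limsup (fun n => Cor M q0 w n) Filter.atTop < ⊤

/-- The language of `M`. -/
def Lang (M : PACost Q A) : Set (ℕ → A) := { w | Accepting M M.qI w }

/-- `M` is a finitary Büchi automaton: every transition is an increment-transition and
all colors are `1` or `2`. -/
def FinBuchi (M : PACost Q A) : Prop :=
  (∀ q a, M.Cst q a = true) ∧ ∀ q, M.Ω q = 1 ∨ M.Ω q = 2

end PACost

/-- The finite segment `w m, w (m+1), …, w (n-1)` of an infinite word `w`. -/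
def seg {A : Type} (w : ℕ → A) (m n : ℕ) : List A :=
  (List.range (n - m)).map fun i => w (m + i)

section DelayGames

variable {I O : Type}

/-- The `n`-th letter of the concatenation `u 0 ++ u 1 ++ u 2 ++ ⋯`
(well-defined whenever all blocks are non-empty). -/
def flatWord [Inhabited I] (u : ℕ → List I) (n : ℕ) : I :=
  (((List.range (n + 1)).map u).flatten).getD n default

/-- A delay function maps every round to a positive number of letters. -/
def DelayFn (f : ℕ → ℕ) : Prop := ∀ i, 0 < f i

/-- The constant delay function `f_k` with `f_k 0 = k + 1` and `f_k i = 1` for `i > 0`. -/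
def constDF (k : ℕ) : ℕ → ℕ := fun i => if i = 0 then k + 1 else 1

/-- The sequence of letters Player I has produced up to (and including) round `i`. -/
def oHist (u : ℕ → List I) (i : ℕ) : List I := ((List.range (i + 1)).map u).flatten

/-- `τO` is a winning strategy for Player O in the delay game with delay function `f`
and winning condition `L`. -/
def OWinning [Inhabited I] (f : ℕ → ℕ) (L : Set (ℕ → I × O)) (τO : List I → O) : Prop :=
  ∀ u : ℕ → List I, ∀ v : ℕ → O,
    (∀ i, (u i).length = f i) →
    (∀ i, v i = τO (oHist u i)) →
    (fun n => (flatWord u n, v n)) ∈ L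

/-- Player O wins the delay game `Γ_f(L)`. -/
def OWins [Inhabited I] (f : ℕ → ℕ) (L : Set (ℕ → I × O)) : Prop :=
  ∃ τO : List I → O, OWinning f L τO

/-- `τI` is a winning strategy for Player I in the delay game with delay function `f`
and winning condition `L`. -/
def IWinning [Inhabited I] (f : ℕ → ℕ) (L : Set (ℕ → I × O)) (τI : List O → List I) : Prop :=
  (∀ w, (τI w).length = f w.length) ∧
  ∀ u : ℕ → List I, ∀ v : ℕ → O,
    (∀ i, u i = τI ((List.range i).map v)) →
    (fun n => (flatWord u n, v n)) ∉ L

/-- Player I wins the delay game `Γ_f(L)`. -/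
def IWins [Inhabited I] (f : ℕ → ℕ) (L : Set (ℕ → I × O)) : Prop :=
  ∃ τI : List O → List I, IWinning f L τI

/-- The cost of a strategy `τO` of Player O: the supremum of the word-costs `wc` of the
outcomes of plays consistent with `τO`. -/
def stratCost [Inhabited I] (wc : (ℕ → I × O) → ℕ∞) (f : ℕ → ℕ) (τO : List I → O) : ℕ∞ :=
  ⨆ (u : ℕ → List I) (v : ℕ → O)
    (_ : (∀ i, (u i).length = f i) ∧ ∀ i, v i = τO (oHist u i)),
    wc (fun n => (flatWord u n, v n))

/-- An optimal winning strategy for Player O in `Γ_f(L)` exists and has cost `c`. -/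
def OptimalCostIs [Inhabited I] (L : Set (ℕ → I × O)) (wc : (ℕ → I × O) → ℕ∞)
    (f : ℕ → ℕ) (c : ℕ∞) : Prop :=
  (∃ τO, OWinning f L τO ∧ stratCost wc f τO = c) ∧
  ∀ τO, OWinning f L τO → c ≤ stratCost wc f τO

end DelayGames

/-- The cost `limsup_n Cor(ρ(w), n)` of the run of `M` on an infinite word `w`. -/
def PACost.wCost {Q I O : Type} (M : PACost Q (I × O)) : (ℕ → I × O) → ℕ∞ :=
  fun w => Filter.limsup (fun n => PACost.Cor M M.qI w n) Filter.atTop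

namespace S14
open PACost

abbrev Alph (n : ℕ) := Bool × (Fin n × Bool)
abbrev St (n : ℕ) := Fin (2*n+3) × ((Fin n × Bool) ⊕ Fin (n+1))
def B (n : ℕ) : ℕ := 2*n+3

lemma B_def (n : ℕ) : B n = 2*n+3 := rfl
lemma B_pos (n : ℕ) : 0 < B n := by unfold B; omega

def trans (n : ℕ) (s : St n) (x : Alph n) : St n :=
  (⟨(s.1.val + 1) % B n, Nat.mod_lt _ (B_pos n)⟩,
   if s.1.val = 0 then Sum.inl x.2
   else match s.2 with
     | Sum.inl kb => if s.1.val = kb.1.val + 1 then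
          Sum.inr (if x.1 = kb.2 then kb.1.succ else 0) else Sum.inl kb
     | Sum.inr e => Sum.inr e)

def col (n : ℕ) (s : St n) : ℕ :=
  match s.2 with
  | Sum.inl _ => 1
  | Sum.inr e => if 2*n+2 ≤ s.1.val + e.val then 2 else 1

def M0 (n : ℕ) : PACost (St n) (Alph n) :=
  ⟨(⟨0, by omega⟩, Sum.inr 0), trans n, col n, fun _ _ => true⟩

lemma col_cases (n : ℕ) (s : St n) : col n s = 1 ∨ col n s = 2 := by
  unfold col; rcases s with ⟨a, p | e⟩
  · simp
  · simp only []; split <;> simp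

variable {n : ℕ}

def kk (w : ℕ → Alph n) (t : ℕ) : Fin n := (w (t * B n)).2.1
def bb (w : ℕ → Alph n) (t : ℕ) : Bool := (w (t * B n)).2.2
def dd (w : ℕ → Alph n) (t : ℕ) : ℕ := (kk w t).val + 1
def eF (w : ℕ → Alph n) (t : ℕ) : Fin (n+1) :=
  if (w (t * B n + dd w t)).1 = bb w t then (kk w t).succ else 0
def ee (w : ℕ → Alph n) (t : ℕ) : ℕ := (eF w t).val

lemma dd_le (w : ℕ → Alph n) (t : ℕ) : dd w t ≤ n := (kk w t).isLt
lemma dd_pos (w : ℕ → Alph n) (t : ℕ) : 1 ≤ dd w t := Nat.le_add_left _ _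
lemma ee_le (w : ℕ → Alph n) (t : ℕ) : ee w t ≤ n := Fin.is_le _
lemma ee_pos_eq (w : ℕ → Alph n) (t : ℕ) (h : (w (t * B n + dd w t)).1 = bb w t) :
    ee w t = dd w t := by unfold ee eF; rw [if_pos h]; exact Fin.val_succ _
lemma ee_neg_eq (w : ℕ → Alph n) (t : ℕ) (h : ¬ (w (t * B n + dd w t)).1 = bb w t) :
    ee w t = 0 := by unfold ee eF; rw [if_neg h]; rfl

lemma addBlock (t s : ℕ) (hs : s < B n) :
    (t * B n + s) % B n = s ∧ (t * B n + s) / B n = t := by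
  constructor
  · rw [mul_comm, Nat.mul_add_mod, Nat.mod_eq_of_lt hs]
  · rw [mul_comm, Nat.mul_add_div (B_pos n), Nat.div_eq_of_lt hs, add_zero]


lemma stateAt_succ (M : PACost (St n) (Alph n)) (w : ℕ → Alph n) (m : ℕ) :
    stateAt M M.qI w (m+1) = M.δ (stateAt M M.qI w m) (w m) := rfl

lemma trans_fst (s : St n) (x : Alph n) : (trans n s x).1.val = (s.1.val + 1) % B n := rfl

lemma trans_snd_zero (s : St n) (x : Alph n) (h0 : s.1.val = 0) :
    (trans n s x).2 = Sum.inl x.2 := by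
  unfold trans; simp [h0]

lemma trans_snd_inl (s : St n) (x : Alph n) (kb : Fin n × Bool)
    (h0 : ¬ s.1.val = 0) (hp : s.2 = Sum.inl kb) :
    (trans n s x).2 =
      if s.1.val = kb.1.val + 1 then Sum.inr (if x.1 = kb.2 then kb.1.succ else 0)
      else Sum.inl kb := by
  rcases s with ⟨a, p⟩
  simp only at hp h0 ⊢
  subst hp
  unfold trans
  simp only [if_neg h0]

lemma trans_snd_inr (s : St n) (x : Alph n) (e : Fin (n+1))
    (h0 : ¬ s.1.val = 0) (hp : s.2 = Sum.inr e) :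
    (trans n s x).2 = Sum.inr e := by
  rcases s with ⟨a, p⟩
  simp only at hp h0 ⊢
  subst hp
  unfold trans
  simp only [if_neg h0]

lemma col_inl (s : St n) (kb : Fin n × Bool) (hp : s.2 = Sum.inl kb) : col n s = 1 := by
  rcases s with ⟨a, p⟩; simp only at hp; subst hp; rfl

lemma col_inr (s : St n) (e : Fin (n+1)) (hp : s.2 = Sum.inr e) :
    col n s = if 2*n+2 ≤ s.1.val + e.val then 2 else 1 := by
  rcases s with ⟨a, p⟩; simp only at hp; subst hp; rfl

lemma run_inv (w : ℕ → Alph n) (m : ℕ) :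
    ((stateAt (M0 n) (M0 n).qI w m).1.val = m % B n) ∧
    (1 ≤ m % B n → m % B n ≤ dd w (m / B n) →
      (stateAt (M0 n) (M0 n).qI w m).2 = Sum.inl (kk w (m / B n), bb w (m / B n))) ∧
    (dd w (m / B n) < m % B n →
      (stateAt (M0 n) (M0 n).qI w m).2 = Sum.inr (eF w (m / B n))) := by
  induction m with
  | zero =>
    refine ⟨by simp [stateAt, M0], ?_, ?_⟩ <;> simp [stateAt, M0] <;> omega
  | succ m ih =>
    obtain ⟨h1, h2, h3⟩ := ih
    set s := stateAt (M0 n) (M0 n).qI w m with hsdef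
    set r := m % B n with hr
    set t := m / B n with ht
    have hrB : r < B n := Nat.mod_lt _ (B_pos n)
    have hm : t * B n + r = m := by rw [mul_comm]; exact Nat.div_add_mod m (B n)
    have hB : B n = 2*n+3 := rfl
    have hdn : dd w t ≤ n := dd_le w t
    have hd1 : 1 ≤ dd w t := dd_pos w t
    have hsucc : (r + 1 < B n → ((m+1) % B n = r + 1 ∧ (m+1) / B n = t)) ∧
        (r + 1 = B n → ((m+1) % B n = 0 ∧ (m+1) / B n = t + 1)) := by
      constructor
      · intro h
        have : m + 1 = t * B n + (r+1) := by omega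
        rw [this]; exact addBlock t (r+1) h
      · intro h
        have h2 : (t+1) * B n = t * B n + B n := by ring
        have : m + 1 = (t+1) * B n + 0 := by omega
        rw [this]; exact addBlock (t+1) 0 (B_pos n)
    have hstep : stateAt (M0 n) (M0 n).qI w (m+1) = trans n s (w m) := rfl
    by_cases hr0 : r = 0
    · -- block start: new claim
      have hn1 := hsucc.1 (by omega)
      have hmt : t * B n = m := by omega
      refine ⟨?_, ?_, ?_⟩
      · rw [hstep, trans_fst, h1, hn1.1]
        exact Nat.mod_eq_of_lt (by omega)
      · intro _ _
        rw [hn1.2, hstep, trans_snd_zero s (w m) (by rw [h1]; exact hr0)]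
        unfold kk bb
        rw [hmt]
      · intro hc
        rw [hn1.1, hn1.2] at hc
        omega
    · have hr1 : 1 ≤ r := by omega
      by_cases hrd : r ≤ dd w t
      · -- pending
        have hp := h2 hr1 hrd
        have hn1 := hsucc.1 (by omega)
        have h0 : ¬ s.1.val = 0 := by rw [h1]; exact hr0
        refine ⟨?_, ?_, ?_⟩
        · rw [hstep, trans_fst, h1, hn1.1]
          exact Nat.mod_eq_of_lt (by omega)
        · intro _ hle
          rw [hn1.2] at hle ⊢
          rw [hn1.1] at hle
          rw [hstep, trans_snd_inl s (w m) _ h0 hp, h1]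
          rw [if_neg (show ¬ r = (kk w t).val + 1 by unfold dd at hle; omega)]
        · intro hc
          rw [hn1.2] at hc ⊢
          rw [hn1.1] at hc
          have hre : r = dd w t := by omega
          rw [hstep, trans_snd_inl s (w m) _ h0 hp, h1]
          rw [if_pos (show r = (kk w t).val + 1 by unfold dd at hre; omega)]
          have hmm : t * B n + dd w t = m := by omega
          unfold eF
          rw [hmm]
      · -- resolved
        have hp := h3 (by omega)
        have h0 : ¬ s.1.val = 0 := by rw [h1]; exact hr0
        by_cases hlast : r + 1 = B n
        · have hn1 := hsucc.2 hlast
          refine ⟨?_, ?_, ?_⟩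
          · rw [hstep, trans_fst, h1, hn1.1, hlast, Nat.mod_self]
          · intro hge _; rw [hn1.1] at hge; omega
          · intro hc; rw [hn1.1] at hc; omega
        · have hn1 := hsucc.1 (by omega)
          refine ⟨?_, ?_, ?_⟩
          · rw [hstep, trans_fst, h1, hn1.1]
            exact Nat.mod_eq_of_lt (by omega)
          · intro _ hle
            rw [hn1.1] at hle
            rw [hn1.2] at hle
            omega
          · intro _
            rw [hn1.2, hstep, trans_snd_inr s (w m) _ h0 hp]

lemma col_run (w : ℕ → Alph n) (m : ℕ) :
    col n (stateAt (M0 n) (M0 n).qI w m) =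
      if 2*n+2 ≤ m % B n + ee w (m / B n) then 2 else 1 := by
  obtain ⟨h1, h2, h3⟩ := run_inv w m
  set s := stateAt (M0 n) (M0 n).qI w m with hsdef
  set r := m % B n with hr
  set t := m / B n with ht
  have hdn : dd w t ≤ n := dd_le w t
  have hd1 : 1 ≤ dd w t := dd_pos w t
  have hen : ee w t ≤ n := ee_le w t
  by_cases hc : dd w t < r
  · rw [col_inr s (eF w t) (h3 hc), h1]
    rfl
  · have hcond : ¬ (2*n+2 ≤ r + ee w t) := by omega
    rw [if_neg hcond]
    by_cases hr0 : 1 ≤ r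
    · exact col_inl s _ (h2 hr0 (by omega))
    · rcases hq : s.2 with p | e
      · exact col_inl s _ hq
      · rw [col_inr s _ hq, h1]
        have : e.val ≤ n := Fin.is_le _
        rw [if_neg (by omega)]


lemma segCost_true {Q : Type} (M : PACost Q (Alph n)) (hC : ∀ q a, M.Cst q a = true)
    (q0 : Q) (w : ℕ → Alph n) (m n' : ℕ) : segCost M q0 w m n' = n' - m := by
  unfold segCost
  rw [Finset.filter_true_of_mem (fun j _ => by simp [hC])]
  exact Nat.card_Ico m n'

lemma exists_col2 : ∃ q : St n, col n q = 2 := by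
  refine ⟨(⟨2*n+2, by omega⟩, Sum.inr ⟨n, by omega⟩), ?_⟩
  show (if 2*n+2 ≤ 2*n+2 + n then 2 else 1) = 2
  rw [if_pos (by omega)]

lemma mem_ans_iff (c' : ℕ) : c' ∈ (M0 n).Ans 1 ↔ c' = 2 := by
  constructor
  · rintro ⟨⟨q, hq⟩, hlt, _⟩
    have hq' : col n q = c' := hq
    rcases col_cases n q with h | h <;> rw [h] at hq' <;> omega
  · rintro rfl
    exact ⟨exists_col2, by omega, ⟨1, rfl⟩⟩

lemma cor_eq_zero (w : ℕ → Alph n) (m : ℕ)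
    (h : col n (stateAt (M0 n) (M0 n).qI w m) = 2) :
    Cor (M0 n) (M0 n).qI w m = 0 := by
  have he : Even ((M0 n).Ω (stateAt (M0 n) (M0 n).qI w m)) := by
    show Even (col n _); rw [h]; exact ⟨1, rfl⟩
  unfold Cor; rw [if_pos he]

lemma cor_eq_sInf (w : ℕ → Alph n) (m : ℕ)
    (h : col n (stateAt (M0 n) (M0 n).qI w m) = 1) :
    Cor (M0 n) (M0 n).qI w m =
      sInf { c : ℕ∞ | ∃ n', m < n' ∧ col n (stateAt (M0 n) (M0 n).qI w n') = 2 ∧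
        c = ((n' - m : ℕ) : ℕ∞) } := by
  have hΩ : (M0 n).Ω = col n := rfl
  unfold Cor
  rw [if_neg (by rw [hΩ, h]; simp)]
  congr 1
  ext c
  simp only [Set.mem_setOf_eq, hΩ, h]
  constructor
  · rintro ⟨n', hn', hans, hc⟩
    refine ⟨n', hn', (mem_ans_iff _).1 hans, ?_⟩
    rw [hc, segCost_true (M0 n) (fun _ _ => rfl)]
  · rintro ⟨n', hn', hcol, hc⟩
    refine ⟨n', hn', ?_, ?_⟩
    · rw [hcol]; exact (mem_ans_iff 2).2 rfl
    · rw [hc, segCost_true (M0 n) (fun _ _ => rfl)]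

lemma cor_ub (w : ℕ → Alph n) (m K : ℕ)
    (h : ∃ n', m < n' ∧ n' ≤ m + K ∧ col n (stateAt (M0 n) (M0 n).qI w n') = 2) :
    Cor (M0 n) (M0 n).qI w m ≤ (K : ℕ∞) := by
  obtain ⟨n', hn1, hn2, hn3⟩ := h
  rcases col_cases n (stateAt (M0 n) (M0 n).qI w m) with hc | hc
  · rw [cor_eq_sInf w m hc]
    exact le_trans (sInf_le ⟨n', hn1, hn3, rfl⟩) (Nat.cast_le.mpr (by omega))
  · rw [cor_eq_zero w m hc]; exact zero_le

lemma cor_lb (w : ℕ → Alph n) (m K : ℕ)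
    (h1 : col n (stateAt (M0 n) (M0 n).qI w m) = 1)
    (h2 : ∀ n', m < n' → col n (stateAt (M0 n) (M0 n).qI w n') = 2 → m + K ≤ n') :
    (K : ℕ∞) ≤ Cor (M0 n) (M0 n).qI w m := by
  rw [cor_eq_sInf w m h1]
  refine le_sInf ?_
  rintro c ⟨n', hn', hcol, rfl⟩
  exact Nat.cast_le.mpr (by have := h2 n' hn' hcol; omega)

lemma cor_all_ub (w : ℕ → Alph n) (J : ℕ) (hJ : J ≤ n) (hE : ∀ t, J ≤ ee w t) (m : ℕ) :
    Cor (M0 n) (M0 n).qI w m ≤ ((2*n+2-J : ℕ) : ℕ∞) := by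
  have hcol := col_run w m
  set r := m % B n with hr
  set t := m / B n with ht
  have hB : B n = 2*n+3 := rfl
  have hm : t * B n + r = m := by rw [mul_comm]; exact Nat.div_add_mod m (B n)
  have hen : ee w t ≤ n := ee_le w t
  have hEt : J ≤ ee w t := hE t
  clear_value r t
  clear hr ht
  by_cases hc : 2*n+2 ≤ r + ee w t
  · rw [if_pos hc] at hcol
    rw [cor_eq_zero w m hcol]; exact zero_le
  · rw [if_neg hc] at hcol
    refine cor_ub w m _ ⟨t * B n + (2*n+2-J), by omega, by omega, ?_⟩
    have hlt : 2*n+2-J < B n := by omega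
    have hab := addBlock (n := n) t (2*n+2-J) hlt
    rw [col_run, hab.1, hab.2]
    rw [if_pos (by omega)]

lemma cor_block_lb (w : ℕ → Alph n) (J : ℕ) (hJ : J ≤ n) (hE : ∀ t, ee w t ≤ J) (t : ℕ) :
    ((2*n+2-J : ℕ) : ℕ∞) ≤ Cor (M0 n) (M0 n).qI w (t * B n) := by
  have hB : B n = 2*n+3 := rfl
  have hab := addBlock (n := n) t 0 (B_pos n)
  rw [add_zero] at hab
  refine cor_lb w _ _ ?_ ?_
  · rw [col_run, hab.1, hab.2]
    rw [if_neg (by have := hE t; omega)]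
  · intro n' hn1 hn2
    by_contra hcon
    push_neg at hcon
    have hs : n' = t * B n + (n' - t * B n) := by omega
    have hslt : n' - t * B n < B n := by omega
    have hab2 := addBlock (n := n) t (n' - t * B n) hslt
    rw [col_run, hs, hab2.1, hab2.2] at hn2
    have hee := hE t
    rw [if_neg (by omega)] at hn2
    omega


def cardSt (n : ℕ) : ℕ := Fintype.card (St n)
def eqv (n : ℕ) : St n ≃ Fin (cardSt n) := Fintype.equivFin (St n)

def MM (n : ℕ) : PACost (Fin (cardSt n)) (Alph n) :=
  ⟨eqv n (M0 n).qI, fun q a => eqv n (trans n ((eqv n).symm q) a),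
   fun q => col n ((eqv n).symm q), fun _ _ => true⟩

lemma MM_state (w : ℕ → Alph n) (m : ℕ) :
    stateAt (MM n) (MM n).qI w m = eqv n (stateAt (M0 n) (M0 n).qI w m) := by
  induction m with
  | zero => rfl
  | succ m ih =>
    show (MM n).δ (stateAt (MM n) (MM n).qI w m) (w m) = _
    rw [ih]
    show eqv n (trans n ((eqv n).symm (eqv n _)) _) = _
    rw [Equiv.symm_apply_apply]
    rfl

lemma MM_omega (w : ℕ → Alph n) (m : ℕ) :
    (MM n).Ω (stateAt (MM n) (MM n).qI w m) = col n (stateAt (M0 n) (M0 n).qI w m) := by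
  rw [MM_state]
  show col n ((eqv n).symm (eqv n _)) = _
  rw [Equiv.symm_apply_apply]

lemma MM_ans (c : ℕ) : (MM n).Ans c = (M0 n).Ans c := by
  unfold PACost.Ans
  ext c'
  simp only [Set.mem_setOf_eq]
  constructor
  · rintro ⟨⟨q, hq⟩, h⟩; exact ⟨⟨(eqv n).symm q, hq⟩, h⟩
  · rintro ⟨⟨q, hq⟩, h⟩
    refine ⟨⟨eqv n q, ?_⟩, h⟩
    show col n ((eqv n).symm (eqv n q)) = c'
    rw [Equiv.symm_apply_apply]; exact hq

lemma MM_cor (w : ℕ → Alph n) (m : ℕ) :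
    Cor (MM n) (MM n).qI w m = Cor (M0 n) (M0 n).qI w m := by
  have hseg : ∀ n', (segCost (MM n) (MM n).qI w m n' : ℕ∞) = (segCost (M0 n) (M0 n).qI w m n' : ℕ∞) := by
    intro n'
    rw [segCost_true (MM n) (fun _ _ => rfl), segCost_true (M0 n) (fun _ _ => rfl)]
  unfold Cor
  simp only [MM_omega, MM_ans, hseg]
  rfl

lemma MM_finBuchi : (MM n).FinBuchi := ⟨fun _ _ => rfl, fun q => col_cases n _⟩

lemma wcost_eq (w : ℕ → Alph n) :
    PACost.wCost (MM n) w = Filter.limsup (fun m => Cor (M0 n) (M0 n).qI w m) Filter.atTop := by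
  unfold PACost.wCost
  simp only [MM_cor]

lemma wcost_ub (w : ℕ → Alph n) (J : ℕ) (hJ : J ≤ n) (hE : ∀ t, J ≤ ee w t) :
    PACost.wCost (MM n) w ≤ ((2*n+2-J : ℕ) : ℕ∞) := by
  rw [wcost_eq]
  exact Filter.limsup_le_of_le (by isBoundedDefault)
    (Filter.Eventually.of_forall (cor_all_ub w J hJ hE))

lemma wcost_lb (w : ℕ → Alph n) (J : ℕ) (hJ : J ≤ n) (hE : ∀ t, ee w t ≤ J) :
    ((2*n+2-J : ℕ) : ℕ∞) ≤ PACost.wCost (MM n) w := by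
  rw [wcost_eq]
  refine Filter.le_limsup_of_frequently_le ?_ (by isBoundedDefault)
  refine Filter.frequently_atTop.mpr (fun N => ⟨N * B n, ?_, cor_block_lb w J hJ hE N⟩)
  have hB := B_pos n
  nlinarith

lemma lang_univ (w : ℕ → Alph n) : w ∈ PACost.Lang (MM n) := by
  show PACost.Accepting (MM n) (MM n).qI w
  unfold PACost.Accepting
  have h := wcost_ub w 0 (Nat.zero_le n) (fun t => Nat.zero_le _)
  unfold PACost.wCost at h
  exact lt_of_le_of_lt h (WithTop.coe_lt_top _)


lemma ee_le_dd (w : ℕ → Alph n) (t : ℕ) : ee w t ≤ dd w t := by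
  unfold ee eF
  split
  · exact le_of_eq (Fin.val_succ _)
  · exact Nat.zero_le _

lemma oHist_zero (u : ℕ → List Bool) : oHist u 0 = u 0 := by
  show (List.map u (List.range 1)).flatten = u 0
  rw [show List.range 1 = [0] from rfl, List.map_singleton]
  simp

lemma oHist_succ (u : ℕ → List Bool) (i : ℕ) : oHist u (i+1) = oHist u i ++ u (i+1) := by
  unfold oHist
  rw [List.range_succ, List.map_append, List.flatten_append]
  simp

lemma oHist_len (u : ℕ → List Bool) (j : ℕ) (hlen : ∀ i, (u i).length = constDF j i) (i : ℕ) :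
    (oHist u i).length = i + j + 1 := by
  induction i with
  | zero => rw [oHist_zero, hlen 0]; simp [constDF]
  | succ i ih =>
    rw [oHist_succ, List.length_append, ih, hlen (i+1)]
    simp [constDF]
    omega

lemma oHist_prefix (u : ℕ → List Bool) {a b : ℕ} (h : a ≤ b) : oHist u a <+: oHist u b := by
  induction b with
  | zero =>
    have : a = 0 := Nat.le_zero.mp h
    subst this; exact List.prefix_refl _
  | succ b ih =>
    rcases Nat.lt_or_ge a (b+1) with h' | h'
    · exact (ih (by omega)).trans (by rw [oHist_succ]; exact List.prefix_append _ _)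
    · have : a = b + 1 := by omega
      subst this; exact List.prefix_refl _

lemma getD_prefix {l1 l2 : List Bool} (h : l1 <+: l2) {m : ℕ} (hm : m < l1.length) :
    l2.getD m default = l1.getD m default := by
  rw [List.getD_eq_getElem _ _ (lt_of_lt_of_le hm h.length_le), List.getD_eq_getElem _ _ hm]
  exact (h.getElem hm).symm

lemma flatWord_eq_getD (u : ℕ → List Bool) (m : ℕ) :
    flatWord u m = (oHist u m).getD m default := rfl

lemma flatWord_getD (u : ℕ → List Bool) (j : ℕ) (hlen : ∀ i, (u i).length = constDF j i)
    {m i : ℕ} (hm : m ≤ i + j) :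
    flatWord u m = (oHist u i).getD m default := by
  rcases le_or_gt m i with h | h
  · exact (getD_prefix (oHist_prefix u h) (by rw [oHist_len u j hlen]; omega)).symm
  · exact getD_prefix (oHist_prefix u h.le) (by rw [oHist_len u j hlen]; omega)

def sig (n j : ℕ) (hn : 0 < n) (hj : j ≤ n) : List Bool → Fin n × Bool :=
  fun h => (⟨j - 1, by omega⟩, if j = 0 then false else h.getD (h.length - 1) default)

lemma sig_play (hn : 0 < n) {j : ℕ} (hj : j ≤ n) (hj1 : 1 ≤ j)
    (u : ℕ → List Bool) (v : ℕ → Fin n × Bool)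
    (hlen : ∀ i, (u i).length = constDF j i)
    (hv : ∀ i, v i = sig n j hn hj (oHist u i)) (t : ℕ) :
    ee (fun m => (flatWord u m, v m)) t = j := by
  set w : ℕ → Alph n := fun m => (flatWord u m, v m) with hw
  set p := t * B n with hp
  have hvp : v p = (⟨j - 1, by omega⟩, (oHist u p).getD (p + j) default) := by
    rw [hv p]
    unfold sig
    rw [if_neg (by omega), oHist_len u j hlen p]
    have : p + j + 1 - 1 = p + j := by omega
    rw [this]
  have hkk : kk w t = ⟨j - 1, by omega⟩ := by
    show (w (t * B n)).2.1 = _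
    simp only [hw, ← hp, hvp]
  have hdd : dd w t = j := by
    unfold dd
    rw [hkk]
    simp only []
    omega
  have hbb : bb w t = flatWord u (p + j) := by
    show (w (t * B n)).2.2 = _
    simp only [hw, ← hp, hvp]
    exact (flatWord_getD u j hlen (le_refl (p + j))).symm
  have hfw : (w (t * B n + dd w t)).1 = flatWord u (p + j) := by
    rw [hdd]
  have := ee_pos_eq w t (by rw [hfw, hbb])
  rw [this, hdd]

lemma replicate_oHist (j : ℕ) (bbit : Bool) (i : ℕ) :
    oHist (fun i => List.replicate (constDF j i) bbit) i = List.replicate (i + j + 1) bbit := by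
  induction i with
  | zero =>
    rw [oHist_zero]
    simp [constDF]
  | succ i ih =>
    rw [oHist_succ, ih]
    simp only [constDF, if_neg (Nat.succ_ne_zero i)]
    rw [← List.replicate_add]
    congr 1
    omega

lemma replicate_flatWord (j : ℕ) (bbit : Bool) (m : ℕ) :
    flatWord (fun i => List.replicate (constDF j i) bbit) m = bbit := by
  rw [flatWord_eq_getD, replicate_oHist]
  rw [List.getD_eq_getElem _ _ (by rw [List.length_replicate]; omega)]
  exact List.getElem_replicate ..

lemma sig0_ee (hn : 0 < n)
    (v : ℕ → Fin n × Bool)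
    (hv : ∀ i, v i = sig n 0 hn (Nat.zero_le n) (oHist (fun i => List.replicate (constDF 0 i) true) i)) (t : ℕ) :
    ee (fun m => (flatWord (fun i => List.replicate (constDF 0 i) true) m, v m)) t = 0 := by
  set u : ℕ → List Bool := fun i => List.replicate (constDF 0 i) true with hu
  set w : ℕ → Alph n := fun m => (flatWord u m, v m) with hw
  have hbb : bb w t = false := by
    show (w (t * B n)).2.2 = _
    simp only [hw, hv (t * B n)]
    unfold sig
    rw [if_pos rfl]
  refine ee_neg_eq w t ?_
  rw [hbb]
  show flatWord u (t * B n + dd w t) ≠ false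
  rw [hu, replicate_flatWord]
  simp


def advStep (n j : ℕ) (τO : List Bool → Fin n × Bool) (m : ℕ) (prev : List Bool) : Bool :=
  if j < m % B n ∧ m % B n ≤ n then
    (if m % B n = (τO (prev.take ((m / B n) * B n + j + 1))).1.val + 1
     then !(τO (prev.take ((m / B n) * B n + j + 1))).2 else false)
  else false

def advL (n j : ℕ) (τO : List Bool → Fin n × Bool) : ℕ → List Bool
  | 0 => []
  | m+1 => advL n j τO m ++ [advStep n j τO m (advL n j τO m)]

def adv (n j : ℕ) (τO : List Bool → Fin n × Bool) (m : ℕ) : Bool :=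
  advStep n j τO m (advL n j τO m)

lemma advL_eq (j : ℕ) (τO : List Bool → Fin n × Bool) (m : ℕ) :
    advL n j τO m = (List.range m).map (adv n j τO) := by
  induction m with
  | zero => rfl
  | succ m ih =>
    show advL n j τO m ++ [adv n j τO m] = _
    rw [List.range_succ, List.map_append, ih]
    rfl

def advU (n j : ℕ) (τO : List Bool → Fin n × Bool) : ℕ → List Bool :=
  fun i => if i = 0 then (List.range (j+1)).map (adv n j τO) else [adv n j τO (j + i)]

lemma advU_len (j : ℕ) (τO : List Bool → Fin n × Bool) (i : ℕ) :
    (advU n j τO i).length = constDF j i := by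
  unfold advU constDF
  split
  · simp
  · simp

lemma advU_oHist (j : ℕ) (τO : List Bool → Fin n × Bool) (i : ℕ) :
    oHist (advU n j τO) i = (List.range (i + j + 1)).map (adv n j τO) := by
  induction i with
  | zero =>
    rw [oHist_zero]
    unfold advU
    rw [if_pos rfl, show 0 + j + 1 = j + 1 by omega]
  | succ i ih =>
    rw [oHist_succ, ih]
    unfold advU
    rw [if_neg (Nat.succ_ne_zero i)]
    rw [show j + (i + 1) = i + j + 1 by omega]
    rw [show i + 1 + j + 1 = (i + j + 1) + 1 by omega]
    conv_rhs => rw [List.range_succ]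
    rw [List.map_append, List.map_singleton]

lemma advU_flatWord (j : ℕ) (τO : List Bool → Fin n × Bool) (m : ℕ) :
    flatWord (advU n j τO) m = adv n j τO m := by
  rw [flatWord_eq_getD, advU_oHist]
  rw [List.getD_eq_getElem _ _ (by simp)]
  simp

lemma adv_ee (j : ℕ) (hj : j ≤ n) (τO : List Bool → Fin n × Bool) (t : ℕ) :
    ee (fun m => (flatWord (advU n j τO) m, τO (oHist (advU n j τO) m))) t ≤ j := by
  set u : ℕ → List Bool := advU n j τO with hu
  set w : ℕ → Alph n := fun m => (flatWord u m, τO (oHist u m)) with hw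
  set p := t * B n with hp
  have hB : B n = 2*n+3 := rfl
  have hkb : (w (t * B n)).2 = τO ((List.range (p + j + 1)).map (adv n j τO)) := by
    simp only [hw, ← hp]
    rw [hu, advU_oHist]
  set kb := τO ((List.range (p + j + 1)).map (adv n j τO)) with hkbdef
  have hdd : dd w t = kb.1.val + 1 := by
    unfold dd kk
    rw [hkb]
  rcases le_or_gt (dd w t) j with h | h
  · exact le_trans (ee_le_dd w t) h
  · -- claim distance exceeds lookahead: falsified
    have hdn : dd w t ≤ n := dd_le w t
    have hab := addBlock (n := n) t (dd w t) (by omega)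
    have hpj : p + j + 1 ≤ p + dd w t := by omega
    have hadv : adv n j τO (p + dd w t) = !kb.2 := by
      unfold adv advStep
      rw [← hp] at hab
      rw [hab.1, hab.2, if_pos ⟨h, hdn⟩]
      rw [advL_eq]
      rw [← List.map_take, List.take_range]
      rw [show min (p + j + 1) (p + dd w t) = p + j + 1 from min_eq_left hpj]
      rw [← hkbdef, if_pos hdd]
    have hbbv : bb w t = kb.2 := by
      unfold bb
      rw [hkb]
    have hee0 : ee w t = 0 := by
      refine ee_neg_eq w t ?_
      rw [hbbv]
      show flatWord u (t * B n + dd w t) = kb.2 → False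
      rw [hu, advU_flatWord]
      intro hcon
      rw [hp] at hadv
      rw [hadv] at hcon
      simp at hcon
    rw [hee0]
    exact Nat.zero_le j
  

lemma stratCost_le (j : ℕ) (τO : List Bool → Fin n × Bool) (K : ℕ∞)
    (h : ∀ (u : ℕ → List Bool) (v : ℕ → Fin n × Bool),
      (∀ i, (u i).length = constDF j i) → (∀ i, v i = τO (oHist u i)) →
      PACost.wCost (MM n) (fun m => (flatWord u m, v m)) ≤ K) :
    stratCost (PACost.wCost (MM n)) (constDF j) τO ≤ K :=
  iSup_le fun u => iSup_le fun v => iSup_le fun hc => h u v hc.1 hc.2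

lemma le_stratCost (j : ℕ) (τO : List Bool → Fin n × Bool) (K : ℕ∞)
    (u : ℕ → List Bool) (v : ℕ → Fin n × Bool)
    (h1 : ∀ i, (u i).length = constDF j i) (h2 : ∀ i, v i = τO (oHist u i))
    (h : K ≤ PACost.wCost (MM n) (fun m => (flatWord u m, v m))) :
    K ≤ stratCost (PACost.wCost (MM n)) (constDF j) τO :=
  le_trans h (le_iSup_of_le u (le_iSup_of_le v (le_iSup_of_le ⟨h1, h2⟩ le_rfl)))

lemma sig_cost (hn : 0 < n) {j : ℕ} (hj : j ≤ n) :
    stratCost (PACost.wCost (MM n)) (constDF j) (sig n j hn hj) = ((2*n+2-j : ℕ) : ℕ∞) := by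
  apply le_antisymm
  · refine stratCost_le j _ _ (fun u v h1 h2 => ?_)
    rcases Nat.eq_zero_or_pos j with hj0 | hj1
    · subst hj0
      exact wcost_ub _ 0 (Nat.zero_le n) (fun t => Nat.zero_le _)
    · exact wcost_ub _ j hj (fun t => le_of_eq (sig_play hn hj hj1 u v h1 h2 t).symm)
  · rcases Nat.eq_zero_or_pos j with hj0 | hj1
    · subst hj0
      refine le_stratCost 0 _ _ (fun i => List.replicate (constDF 0 i) true)
        (fun i => sig n 0 hn hj (oHist (fun i => List.replicate (constDF 0 i) true) i))
        (fun i => by simp) (fun i => rfl) ?_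
      exact wcost_lb _ 0 (Nat.zero_le n) (fun t => le_of_eq (sig0_ee hn _ (fun i => rfl) t))
    · refine le_stratCost j _ _ (fun i => List.replicate (constDF j i) false)
        (fun i => sig n j hn hj (oHist (fun i => List.replicate (constDF j i) false) i))
        (fun i => by simp) (fun i => rfl) ?_
      exact wcost_lb _ j hj (fun t =>
        le_of_eq (sig_play hn hj hj1 _ _ (fun i => by simp) (fun i => rfl) t))

lemma adv_cost (j : ℕ) (hj : j ≤ n) (τO : List Bool → Fin n × Bool) :
    ((2*n+2-j : ℕ) : ℕ∞) ≤ stratCost (PACost.wCost (MM n)) (constDF j) τO :=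
  le_stratCost j τO _ (advU n j τO) (fun i => τO (oHist (advU n j τO) i))
    (advU_len j τO) (fun i => rfl)
    (wcost_lb _ j hj (adv_ee j hj τO))

lemma cardSt_eq : cardSt n = (2*n+3) * (n*2 + (n+1)) := by
  unfold cardSt St
  rw [Fintype.card_prod, Fintype.card_sum, Fintype.card_prod, Fintype.card_fin,
    Fintype.card_fin, Fintype.card_bool, Fintype.card_fin]

end S14

/-- Theorem 8, gradual tradeoff. There is a quadratic-size family of
finitary Büchi automata `A''_n` over `{0,1} × ({1,…,n} × {0,1})` such that for every
`j ∈ {0, …, n}`, Player O wins with lookahead `j` and an optimal winning strategy with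
lookahead `j` exists and has cost `2(n+1) - j`. -/
theorem statement14 :
    ∃ c : ℕ, 0 < c ∧ ∀ n : ℕ, 0 < n →
      ∃ m : ℕ, ∃ M : PACost (Fin m) (Bool × (Fin n × Bool)),
        m ≤ c * n ^ 2 ∧ M.FinBuchi ∧
        ∀ j : ℕ, j ≤ n →
          OWins (constDF j) M.Lang ∧
          OptimalCostIs M.Lang M.wCost (constDF j) ((2 * (n + 1) - j : ℕ) : ℕ∞) := by
  refine ⟨20, by omega, fun n hn => ?_⟩
  refine ⟨S14.cardSt n, S14.MM n, ?_, S14.MM_finBuchi, fun j hj => ?_⟩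
  · rw [S14.cardSt_eq]
    nlinarith
  · constructor
    · exact ⟨S14.sig n j hn hj, fun u v _ _ => S14.lang_univ _⟩
    · have hc : (2*(n+1) - j : ℕ) = (2*n+2-j : ℕ) := by omega
      rw [hc]
      constructor
      · exact ⟨S14.sig n j hn hj, fun u v _ _ => S14.lang_univ _, S14.sig_cost hn hj⟩
      · intro τO _
        exact S14.adv_cost j hj τO
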